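/- Let s ≥ 0. (i) If the adjoint polytope P^(s) has dimension n, then for every r ≥ 0 one has (P^(s))^(r) = P^(s+r), where the adjoint of P^(s) is taken with respect to its own irredundant facet description. (ii) For every real r > 0 one has r·(P^(s)) = (rP)^(rs). -/

import Mathlib

open scoped BigOperators Pointwise

noncomputable section

/-- Pairing `⟨a, x⟩ = ∑ aⱼ xⱼ` of an integer linear functional with a real point. -/
def ipair {n : ℕ} (a : Fin n → ℤ) (x : Fin n → ℝ) : ℝ := ∑ j, (a j : ℝ) * x j

/-- An integer vector is primitive if it is nonzero and not a nontrivial integer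
multiple of another integer vector. -/
def IsPrimitive {n : ℕ} (a : Fin n → ℤ) : Prop :=
  a ≠ 0 ∧ ∀ (k : ℤ) (b : Fin n → ℤ), a = k • b → IsUnit k

/-- The set of integer (lattice) points of `ℝⁿ`. -/
def IntPts (n : ℕ) : Set (Fin n → ℝ) := Set.range (fun z : Fin n → ℤ => fun j => (z j : ℝ))

/-- The dimension of a subset of `ℝⁿ` (the dimension of its affine hull). -/
def setDim {n : ℕ} (S : Set (Fin n → ℝ)) : ℕ := Module.finrank ℝ (vectorSpan ℝ S)

/-- An irredundant facet description `P = {x : A x ≥ b}` of an `n`-dimensional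
rational polytope: the rows `aᵢ` of `A` are primitive integer vectors, the right hand
sides are rational, `P` is bounded and `n`-dimensional, every inequality defines a facet
(a face of dimension `n-1`), and no inequality is repeated. -/
structure PolyDesc (n m : ℕ) : Type where
  hm : 0 < m
  A : Fin m → Fin n → ℤ
  b : Fin m → ℚ
  prim : ∀ i, IsPrimitive (A i)
  bounded : Bornology.IsBounded {x : Fin n → ℝ | ∀ i, (b i : ℝ) ≤ ipair (A i) x}
  fulldim : setDim {x : Fin n → ℝ | ∀ i, (b i : ℝ) ≤ ipair (A i) x} = n
  facet_dim : ∀ i, setDim {x : Fin n → ℝ |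
      (∀ j, (b j : ℝ) ≤ ipair (A j) x) ∧ ipair (A i) x = (b i : ℝ)} + 1 = n
  irredundant : Function.Injective (fun i => (A i, b i))

namespace PolyDesc

variable {n m : ℕ} (D : PolyDesc n m)

/-- The polytope `P` itself. -/
def pts : Set (Fin n → ℝ) := {x | ∀ i, (D.b i : ℝ) ≤ ipair (D.A i) x}

/-- Lattice distance `d_{Fᵢ}(x) = ⟨aᵢ, x⟩ - bᵢ` from (the hyperplane spanned by)
the `i`-th facet. -/
def dF (i : Fin m) (x : Fin n → ℝ) : ℝ := ipair (D.A i) x - (D.b i : ℝ)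

/-- Lattice distance `d_P(x) = minᵢ d_{Fᵢ}(x)` from the boundary of `P`. -/
def dist (x : Fin n → ℝ) : ℝ :=
  Finset.univ.inf'
    (Finset.univ_nonempty_iff.mpr (Fin.pos_iff_nonempty.mp D.hm))
    (fun i => D.dF i x)

/-- The adjoint polytope `P⁽ˢ⁾ = {x : d_P(x) ≥ s}`. -/
def adj (s : ℝ) : Set (Fin n → ℝ) := {x | s ≤ D.dist x}

/-- The `i`-th facet `Fᵢ` of `P`. -/
def facet (i : Fin m) : Set (Fin n → ℝ) := {x ∈ D.pts | ipair (D.A i) x = (D.b i : ℝ)}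

/-- The set `{s > 0 : P⁽ˢ⁾ ≠ ∅}`, whose supremum is `μ(P)⁻¹`. -/
def qcdInvSet : Set ℝ := {s : ℝ | 0 < s ∧ (D.adj s).Nonempty}

/-- `μ(P)⁻¹ = sup {s > 0 : P⁽ˢ⁾ ≠ ∅}`. -/
def qcdInv : ℝ := sSup D.qcdInvSet

/-- The ℚ-codegree `μ(P) = (sup {s > 0 : P⁽ˢ⁾ ≠ ∅})⁻¹`. -/
def qcd : ℝ := D.qcdInv⁻¹

/-- The core `core(P) = P^{(1/μ(P))}`. -/
def core : Set (Fin n → ℝ) := D.adj D.qcdInv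

/-- The codegree `cd(P) = min {k ∈ ℕ, k ≥ 1 : int(kP) ∩ ℤⁿ ≠ ∅}`. -/
def codeg : ℕ := sInf {k : ℕ | 0 < k ∧
  ∃ z : Fin n → ℤ, (fun j => (z j : ℝ)) ∈ interior ((k : ℝ) • D.pts)}

end PolyDesc

/-- The face of `S` on which the linear functional `u` is maximized. -/
def argFace {n : ℕ} (S : Set (Fin n → ℝ)) (u : Fin n → ℝ) : Set (Fin n → ℝ) :=
  {x ∈ S | ∀ y ∈ S, ∑ j, u j * y j ≤ ∑ j, u j * x j}

/-- `S` and `T` have the same normal fan: two linear functionals lie in the same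
(relatively open) cone of the normal fan of `S`, i.e. are maximized on the same face
of `S`, iff the same holds for `T`. -/
def SameNormalFan {n : ℕ} (S T : Set (Fin n → ℝ)) : Prop :=
  ∀ u v : Fin n → ℝ, (argFace S u = argFace S v ↔ argFace T u = argFace T v)

/-- The normal fan of `S` refines the normal fan of `T`. -/
def RefinesNormalFan {n : ℕ} (S T : Set (Fin n → ℝ)) : Prop :=
  ∀ u v : Fin n → ℝ, argFace S u = argFace S v → argFace T u = argFace T v

namespace PolyDesc
variable {n m : ℕ} (D : PolyDesc n m)

/-- `{s > 0 : N(P⁽ˢ⁾) = N(P)}`, whose supremum is `τ(P)⁻¹`. -/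
def nefInvSet : Set ℝ := {s : ℝ | 0 < s ∧ SameNormalFan (D.adj s) D.pts}

/-- `τ(P)⁻¹ = sup {s > 0 : N(P⁽ˢ⁾) = N(P)}`. -/
def nefInv : ℝ := sSup D.nefInvSet

/-- The nef value `τ(P)`. -/
def nefVal : ℝ := D.nefInv⁻¹

/-- The set of inequalities active at `x`; the normal cone of the minimal face of `P`
containing `x` is generated by `{aᵢ : i ∈ active x}`, and all cones of the normal fan
of `P` arise in this way. -/
def active (x : Fin n → ℝ) : Set (Fin m) := {i | ipair (D.A i) x = (D.b i : ℝ)}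

/-- The normal cone at the vertex `v` is ℚ-Gorenstein of index `r`, witnessed by the
primitive lattice point `u = u_σ` with `⟨aᵢ, u⟩ = r` for all active `i`. -/
def VertexQG (v : Fin n → ℝ) (u : Fin n → ℤ) (r : ℤ) : Prop :=
  IsPrimitive u ∧ 0 < r ∧ ∀ i ∈ D.active v, (∑ j, D.A i j * u j) = r

/-- The normal fan of `P` is ℚ-Gorenstein: every maximal cone (normal cone of a
vertex, i.e. of an extreme point) is ℚ-Gorenstein. -/
def QGorenstein : Prop := ∀ v ∈ Set.extremePoints ℝ D.pts, ∃ u r, D.VertexQG v u r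

end PolyDesc

/-- The point `v(s) = v + (s/r_σ) • u_σ`. -/
def vmove {n : ℕ} (v : Fin n → ℝ) (s : ℝ) (u : Fin n → ℤ) (r : ℤ) : Fin n → ℝ :=
  v + (s / (r : ℝ)) • (fun j => ((u j : ℝ)))

/-- The height of a point `y` in the cone generated by `{aᵢ : i ∈ I}`:
`ht(y) = max {∑ λᵢ : λᵢ ≥ 0, ∑ λᵢ aᵢ = y}`. -/
def coneHeight {n m : ℕ} (D : PolyDesc n m) (I : Set (Fin m)) (y : Fin n → ℝ) : ℝ :=
  sSup {t : ℝ | ∃ c : Fin m → ℝ, (∀ i, 0 ≤ c i) ∧ (∀ i ∉ I, c i = 0) ∧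
    (y = ∑ i, c i • (fun j => ((D.A i j : ℝ)))) ∧ t = ∑ i, c i}

/-- `P` is α-canonical: for every cone `σ` of the normal fan of `P` (the normal cone
of the minimal face containing a point `x ∈ P`, generated by `{aᵢ : i ∈ active x}`),
every nonzero lattice point of `σ` has height at least `α`. -/
def AlphaCanonical {n m : ℕ} (D : PolyDesc n m) (α : ℝ) : Prop :=
  ∀ x ∈ D.pts, ∀ z : Fin n → ℤ, z ≠ 0 →
    (∃ c : Fin m → ℝ, (∀ i, 0 ≤ c i) ∧ (∀ i ∉ D.active x, c i = 0) ∧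
      ((fun j => ((z j : ℝ))) = ∑ i, c i • (fun j => ((D.A i j : ℝ))))) →
    α ≤ coneHeight D (D.active x) (fun j => ((z j : ℝ)))

/-- `P` is a lattice polytope: the convex hull of finitely many integer points. -/
def IsLatticePoly {n : ℕ} (P : Set (Fin n → ℝ)) : Prop :=
  ∃ V : Finset (Fin n → ℤ),
    P = convexHull ℝ ((fun z : Fin n → ℤ => fun j => ((z j : ℝ))) '' (V : Set (Fin n → ℤ)))

/-- The `i`-th standard basis vector of `ℝᵗ`. -/
def stdBasisVec (t : ℕ) (i : Fin t) : Fin t → ℝ := fun j => if j = i then 1 else 0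

/-- The marking vectors of a Cayley sum: `0, e₁, …, e_t ∈ ℝᵗ`. -/
def cayleyVec (t : ℕ) : Fin (t + 1) → (Fin t → ℝ) :=
  fun j => if h : (j : ℕ) = 0 then 0 else stdBasisVec t ⟨(j : ℕ) - 1, by have := j.isLt; omega⟩

/-- The Cayley sum `Q₀ * ⋯ * Q_t = conv((Q₀ × {0}) ∪ (Q₁ × {e₁}) ∪ ⋯ ∪ (Q_t × {e_t}))`. -/
def cayleySum {k t : ℕ} (Q : Fin (t + 1) → Set (Fin k → ℝ)) :
    Set ((Fin k → ℝ) × (Fin t → ℝ)) :=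
  convexHull ℝ (⋃ j, (Q j) ×ˢ ({cayleyVec t j} : Set (Fin t → ℝ)))

/-- `P ⊆ ℝⁿ` is a Cayley polytope `P₀ * ⋯ * P_t` of length `t+1` of lattice polytopes
`Pⱼ ⊆ ℝᵏ` with `k + t = n`: some affine lattice isomorphism `ℤⁿ ≅ ℤᵏ × ℤᵗ`
identifies `P` with such a Cayley sum. -/
def IsCayley {n : ℕ} (P : Set (Fin n → ℝ)) (k t : ℕ) : Prop :=
  k + t = n ∧
  ∃ Q : Fin (t + 1) → Finset (Fin k → ℤ), (∀ j, (Q j).Nonempty) ∧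
  ∃ f : (Fin n → ℝ) ≃ᵃ[ℝ] (Fin k → ℝ) × (Fin t → ℝ),
    f '' IntPts n = (IntPts k) ×ˢ (IntPts t) ∧
    f '' P = cayleySum (fun j =>
      convexHull ℝ ((fun z : Fin k → ℤ => fun i => ((z i : ℝ))) '' (Q j : Set (Fin k → ℤ))))

/-- The unimodular simplex `Δₙ = conv(0, e₁, …, eₙ)`. -/
def unimodSimplex (n : ℕ) : Set (Fin n → ℝ) :=
  convexHull ℝ (insert (0 : Fin n → ℝ) (Set.range (stdBasisVec n)))

/-- Two subsets of `ℝⁿ` are unimodularly equivalent: an affine lattice automorphism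
maps one onto the other. -/
def UnimodEquiv {n : ℕ} (P P' : Set (Fin n → ℝ)) : Prop :=
  ∃ f : (Fin n → ℝ) ≃ᵃ[ℝ] (Fin n → ℝ), f '' IntPts n = IntPts n ∧ f '' P = P'

/-- The codegree `cd(P) = min {k ∈ ℕ, k ≥ 1 : int(kP) ∩ ℤⁿ ≠ ∅}` of a polytope given
as a set. -/
def codegS {n : ℕ} (P : Set (Fin n → ℝ)) : ℕ :=
  sInf {k : ℕ | 0 < k ∧ ∃ z : Fin n → ℤ, (fun j => (z j : ℝ)) ∈ interior ((k : ℝ) • P)}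

/-- `P` has lattice width one: some nonzero integer linear functional has minimum `c`
and maximum `c + 1` on `P`. -/
def HasLatticeWidthOne {n : ℕ} (P : Set (Fin n → ℝ)) : Prop :=
  ∃ u : Fin n → ℤ, u ≠ 0 ∧ ∃ c : ℤ,
    (∀ x ∈ P, (c : ℝ) ≤ ipair u x ∧ ipair u x ≤ (c : ℝ) + 1) ∧
    (∃ x ∈ P, ipair u x = (c : ℝ)) ∧ (∃ x ∈ P, ipair u x = (c : ℝ) + 1)

/-- `P` is a lattice pyramid: for some primitive `u`, `P` is the convex hull of a base
lying in the lattice hyperplane `{⟨u, ·⟩ = c}` and an apex at lattice distance one from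
it (this is equivalent to being unimodularly equivalent to
`conv((Q × {0}) ∪ {(0, …, 0, 1)})` for an `(n-1)`-dimensional lattice polytope `Q`). -/
def IsLatticePyramid {n : ℕ} (P : Set (Fin n → ℝ)) : Prop :=
  ∃ u : Fin n → ℤ, IsPrimitive u ∧ ∃ c : ℤ, ∃ apex ∈ P,
    ipair u apex = (c : ℝ) + 1 ∧
    P = convexHull ℝ ({x ∈ P | ipair u x = (c : ℝ)} ∪ {apex})

/-- `F` is a facet of `S`: an exposed face of dimension `dim S - 1`. -/
def IsFacetOf {n : ℕ} (F S : Set (Fin n → ℝ)) : Prop :=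
  IsExposed ℝ S F ∧ F.Nonempty ∧ setDim F + 1 = setDim S


/-! ### Auxiliary lemmas -/

section AuxBasic

variable {n : ℕ}

lemma ipair_add (a : Fin n → ℤ) (x y : Fin n → ℝ) :
    ipair a (x + y) = ipair a x + ipair a y := by
  simp [ipair, mul_add, Finset.sum_add_distrib]

lemma ipair_smul (a : Fin n → ℤ) (c : ℝ) (x : Fin n → ℝ) :
    ipair a (c • x) = c * ipair a x := by
  simp only [ipair, Pi.smul_apply, smul_eq_mul, Finset.mul_sum]
  exact Finset.sum_congr rfl fun j _ => by ring

lemma ipair_sub (a : Fin n → ℤ) (x y : Fin n → ℝ) :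
    ipair a (x - y) = ipair a x - ipair a y := by
  simp [ipair, mul_sub, Finset.sum_sub_distrib]

/-- `ipair a` as a linear map. -/
def ipairL (a : Fin n → ℤ) : (Fin n → ℝ) →ₗ[ℝ] ℝ where
  toFun := ipair a
  map_add' := ipair_add a
  map_smul' c x := by simp [ipair_smul]

@[simp] lemma ipairL_apply (a : Fin n → ℤ) (x : Fin n → ℝ) : ipairL a x = ipair a x := rfl

lemma ipair_single (a : Fin n → ℤ) (j : Fin n) : ipair a (Pi.single j 1) = (a j : ℝ) := by
  simp [ipair, Pi.single_apply, mul_ite]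

lemma ipair_self_pos {a : Fin n → ℤ} (ha : a ≠ 0) :
    0 < ipair a (fun j => (a j : ℝ)) := by
  obtain ⟨j₀, hj₀⟩ := Function.ne_iff.mp ha
  refine Finset.sum_pos' (fun j _ => mul_self_nonneg _) ⟨j₀, Finset.mem_univ _, ?_⟩
  have h : ((a j₀ : ℝ)) ≠ 0 := by exact_mod_cast hj₀
  exact mul_self_pos.mpr h

lemma IsPrimitive.exists_coord_ne {a : Fin n → ℤ} (ha : IsPrimitive a) : ∃ j, a j ≠ 0 :=
  Function.ne_iff.mp ha.1

/-- Two primitive integer vectors that are positive real multiples of each other are equal. -/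
lemma IsPrimitive.eq_of_smul {a a' : Fin n → ℤ} (ha : IsPrimitive a) (ha' : IsPrimitive a')
    {q : ℝ} (hq : 0 < q) (h : ∀ j, (a j : ℝ) = q * (a' j : ℝ)) : a = a' := by
  obtain ⟨j₀, hj₀⟩ := ha'.exists_coord_ne
  set u : ℤ := a j₀ with hu_def
  set v : ℤ := a' j₀ with hv_def
  have hv : v ≠ 0 := hj₀
  have hvr : ((v : ℝ)) ≠ 0 := by exact_mod_cast hv
  have hu : u ≠ 0 := by
    intro h0
    have h1 := h j₀
    rw [← hu_def, ← hv_def, h0] at h1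
    simp only [Int.cast_zero] at h1
    rcases mul_eq_zero.mp h1.symm with h2 | h2
    · exact hq.ne' h2
    · exact hvr h2
  have key : ∀ j, v * a j = u * a' j := by
    intro j
    have h1 : ((v : ℝ)) * (a j : ℝ) = (u : ℝ) * (a' j : ℝ) := by
      rw [h j, h j₀]; ring
    exact_mod_cast h1
  set g : ℤ := (Int.gcd u v : ℤ) with hg_def
  have hgpos : 0 < Int.gcd u v := Int.gcd_pos_of_ne_zero_left _ hu
  have hgz : g ≠ 0 := by positivity
  set u' : ℤ := u / g with hu'_def
  set v' : ℤ := v / g with hv'_def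
  have hu'g : u' * g = u := Int.ediv_mul_cancel (Int.gcd_dvd_left _ _)
  have hv'g : v' * g = v := Int.ediv_mul_cancel (Int.gcd_dvd_right _ _)
  have hcop : IsCoprime u' v' := by
    rw [Int.isCoprime_iff_gcd_eq_one]
    exact Int.gcd_div_gcd_div_gcd hgpos
  have key' : ∀ j, v' * a j = u' * a' j := by
    intro j
    have h1 : g * (v' * a j) = g * (u' * a' j) := by
      rw [show g * (v' * a j) = (v' * g) * a j by ring, hv'g,
        show g * (u' * a' j) = (u' * g) * a' j by ring, hu'g]
      exact key j
    exact mul_left_cancel₀ hgz h1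
  have hv'dvd : ∀ j, v' ∣ a' j := by
    intro j
    have : v' ∣ u' * a' j := ⟨a j, (key' j).symm⟩
    exact (hcop.symm.dvd_of_dvd_mul_left this)
  have hu'dvd : ∀ j, u' ∣ a j := by
    intro j
    have : u' ∣ v' * a j := ⟨a' j, key' j⟩
    exact (hcop.dvd_of_dvd_mul_left this)
  have hv'unit : IsUnit v' := by
    refine ha'.2 v' (fun j => a' j / v') (funext fun j => ?_)
    simp only [Pi.smul_apply, smul_eq_mul]
    exact (Int.mul_ediv_cancel' (hv'dvd j)).symm
  have hu'unit : IsUnit u' := by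
    refine ha.2 u' (fun j => a j / u') (funext fun j => ?_)
    simp only [Pi.smul_apply, smul_eq_mul]
    exact (Int.mul_ediv_cancel' (hu'dvd j)).symm
  have hgr : (0 : ℝ) < (g : ℝ) := by
    rw [hg_def]; exact_mod_cast hgpos
  have hqj : (u : ℝ) = q * (v : ℝ) := h j₀
  rcases Int.isUnit_iff.mp hu'unit with hu1 | hu1 <;>
    rcases Int.isUnit_iff.mp hv'unit with hv1 | hv1
  · -- u' = 1, v' = 1
    funext j
    have := key' j
    rw [hu1, hv1] at this
    simpa using this
  · -- u' = 1, v' = -1 : contradiction with q > 0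
    exfalso
    have hu2 : u = g := by rw [← hu'g, hu1]; ring
    have hv2 : v = -g := by rw [← hv'g, hv1]; ring
    rw [hu2, hv2] at hqj
    push_cast at hqj
    nlinarith
  · -- u' = -1, v' = 1 : contradiction
    exfalso
    have hu2 : u = -g := by rw [← hu'g, hu1]; ring
    have hv2 : v = g := by rw [← hv'g, hv1]; ring
    rw [hu2, hv2] at hqj
    push_cast at hqj
    nlinarith
  · -- u' = -1, v' = -1
    funext j
    have := key' j
    rw [hu1, hv1] at this
    have h2 : -(a j) = -(a' j) := by simpa using this
    omega

end AuxBasic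

section AuxKer

variable {n : ℕ}

lemma ipairL_ne_zero {a : Fin n → ℤ} (ha : a ≠ 0) : ipairL a ≠ 0 := by
  intro h
  have h1 := ipair_self_pos ha
  have h2 : ipairL a (fun j => (a j : ℝ)) = 0 := by rw [h]; rfl
  rw [ipairL_apply] at h2
  rw [h2] at h1
  exact lt_irrefl _ h1

lemma finrank_ker_lf {f : (Fin n → ℝ) →ₗ[ℝ] ℝ} (hf : f ≠ 0) :
    Module.finrank ℝ (LinearMap.ker f) + 1 = n := by
  obtain ⟨x, hx⟩ : ∃ x, f x ≠ 0 := by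
    by_contra hno; push_neg at hno
    exact hf (LinearMap.ext fun x => by rw [hno x]; rfl)
  have hr : LinearMap.range f = ⊤ := by
    rw [eq_top_iff]
    intro r _
    exact ⟨(r / f x) • x, by rw [map_smul, smul_eq_mul]; field_simp⟩
  have h1 := LinearMap.finrank_range_add_finrank_ker f
  rw [hr, finrank_top] at h1
  rw [Module.finrank_self, Module.finrank_pi, Fintype.card_fin] at h1
  omega

lemma ker_eq_of_le {f : (Fin n → ℝ) →ₗ[ℝ] ℝ} (hf : f ≠ 0) {V : Submodule ℝ (Fin n → ℝ)}
    (hV : Module.finrank ℝ V + 1 = n) (hle : V ≤ LinearMap.ker f) :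
    LinearMap.ker f = V := by
  have h1 := finrank_ker_lf hf
  exact (Submodule.eq_of_le_of_finrank_le hle (by omega)).symm

lemma vectorSpan_le_ker {S : Set (Fin n → ℝ)} {a : Fin n → ℤ} {β : ℝ}
    (h : ∀ x ∈ S, ipair a x = β) : vectorSpan ℝ S ≤ LinearMap.ker (ipairL a) := by
  rw [vectorSpan_def, Submodule.span_le]
  rintro v ⟨x, hx, y, hy, rfl⟩
  simp only [SetLike.mem_coe, LinearMap.mem_ker, vsub_eq_sub, ipairL_apply]
  rw [ipair_sub, h x hx, h y hy, sub_self]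

lemma exists_ratio {F : Set (Fin n → ℝ)} {a a' : Fin n → ℤ} {β β' : ℝ}
    (hdim : Module.finrank ℝ (vectorSpan ℝ F) + 1 = n)
    (ha : a ≠ 0) (ha' : a' ≠ 0)
    (hA : ∀ x ∈ F, ipair a x = β) (hA' : ∀ x ∈ F, ipair a' x = β') :
    ∃ q : ℝ, q ≠ 0 ∧ ∀ x, ipair a x = q * ipair a' x := by
  have hker : LinearMap.ker (ipairL a) = vectorSpan ℝ F :=
    ker_eq_of_le (ipairL_ne_zero ha) hdim (vectorSpan_le_ker hA)
  have hker' : LinearMap.ker (ipairL a') = vectorSpan ℝ F :=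
    ker_eq_of_le (ipairL_ne_zero ha') hdim (vectorSpan_le_ker hA')
  obtain ⟨u, hu⟩ : ∃ u, ipair a' u ≠ 0 := ⟨_, (ipair_self_pos ha').ne'⟩
  have huV : u ∉ vectorSpan ℝ F := by
    intro hmem
    rw [← hker'] at hmem
    exact hu hmem
  set q : ℝ := ipair a u / ipair a' u with hq_def
  have hfu : ipair a u ≠ 0 := by
    intro h0
    have hm : u ∈ LinearMap.ker (ipairL a) := by
      simpa [LinearMap.mem_ker] using h0
    rw [hker] at hm
    exact huV hm
  have hq0 : q ≠ 0 := div_ne_zero hfu hu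
  refine ⟨q, hq0, ?_⟩
  set gm : (Fin n → ℝ) →ₗ[ℝ] ℝ := ipairL a - q • ipairL a' with hgm_def
  have hgm_apply : ∀ x, gm x = ipair a x - q * ipair a' x := fun x => rfl
  have hgm : gm = 0 := by
    by_contra hgne
    have hle : vectorSpan ℝ F ≤ LinearMap.ker gm := by
      intro v hv
      have h1 : v ∈ LinearMap.ker (ipairL a) := by rw [hker]; exact hv
      have h2 : v ∈ LinearMap.ker (ipairL a') := by rw [hker']; exact hv
      simp only [LinearMap.mem_ker, ipairL_apply] at h1 h2
      simp only [LinearMap.mem_ker, hgm_apply, h1, h2, mul_zero, sub_zero]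
    have hkg := ker_eq_of_le hgne hdim hle
    have hum : u ∈ LinearMap.ker gm := by
      simp only [LinearMap.mem_ker, hgm_apply, hq_def]
      field_simp; ring
    rw [hkg] at hum
    exact huV hum
  intro x
  have h := hgm_apply x
  rw [hgm] at h
  simp only [LinearMap.zero_apply] at h
  linarith

end AuxKer

section AuxGeom

variable {n : ℕ}

lemma exists_generic {C : Set (Fin n → ℝ)} (hC : Convex ℝ C) (hne : C.Nonempty)
    {M : ℕ} (a : Fin M → Fin n → ℤ) (β : Fin M → ℝ)
    (hval : ∀ j, ∀ x ∈ C, β j ≤ ipair (a j) x) :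
    ∃ w ∈ C, ∀ j, ipair (a j) w = β j → ∀ x ∈ C, ipair (a j) x = β j := by
  classical
  suffices h : ∀ T : Finset (Fin M), ∃ w ∈ C, ∀ j ∈ T,
      (∃ x ∈ C, β j < ipair (a j) x) → β j < ipair (a j) w by
    obtain ⟨w, hwC, hw⟩ := h Finset.univ
    refine ⟨w, hwC, fun j hj x hx => ?_⟩
    by_contra hne2
    have hlt : β j < ipair (a j) x := lt_of_le_of_ne (hval j x hx) (Ne.symm hne2)
    have := hw j (Finset.mem_univ j) ⟨x, hx, hlt⟩
    rw [hj] at this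
    exact lt_irrefl _ this
  intro T
  induction T using Finset.induction_on with
  | empty => exact ⟨hne.choose, hne.choose_spec, fun j hj => absurd hj (Finset.notMem_empty j)⟩
  | @insert j₀ T hj₀ ih =>
    obtain ⟨w, hwC, hw⟩ := ih
    by_cases hex : ∃ x ∈ C, β j₀ < ipair (a j₀) x
    · obtain ⟨x₀, hx₀C, hx₀⟩ := hex
      refine ⟨(1/2 : ℝ) • w + (1/2 : ℝ) • x₀,
        hC hwC hx₀C (by norm_num) (by norm_num) (by norm_num), ?_⟩
      intro j hj hexj
      have hcomb : ipair (a j) ((1/2 : ℝ) • w + (1/2 : ℝ) • x₀)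
          = (1/2) * ipair (a j) w + (1/2) * ipair (a j) x₀ := by
        rw [ipair_add, ipair_smul, ipair_smul]
      rcases Finset.mem_insert.mp hj with rfl | hjT2
      · rw [hcomb]
        have h1 := hval j w hwC
        linarith
      · rw [hcomb]
        have h1 := hw j hjT2 hexj
        have h2 := hval j x₀ hx₀C
        linarith
    · refine ⟨w, hwC, fun j hj hexj => ?_⟩
      rcases Finset.mem_insert.mp hj with rfl | hjT2
      · exact absurd hexj hex
      · exact hw j hjT2 hexj

lemma not_valid_tight_of_strict {M : ℕ} (hM : 0 < M) (a : Fin M → Fin n → ℤ) (β : Fin M → ℝ)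
    {c : Fin n → ℤ} {γ : ℝ} (hc : c ≠ 0)
    {w : Fin n → ℝ} (hstrict : ∀ j, β j < ipair (a j) w)
    (hvalid : ∀ x, (∀ j, β j ≤ ipair (a j) x) → γ ≤ ipair c x)
    (htight : ipair c w = γ) : False := by
  classical
  set d : Fin n → ℝ := fun j => (c j : ℝ) with hd_def
  have hd : 0 < ipair c d := ipair_self_pos hc
  have hMn : (Finset.univ : Finset (Fin M)).Nonempty :=
    Finset.univ_nonempty_iff.mpr (Fin.pos_iff_nonempty.mp hM)
  set ε : ℝ := Finset.univ.inf' hMn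
    (fun j => (ipair (a j) w - β j) / (|ipair (a j) d| + 1)) with hε_def
  have hεpos : 0 < ε := by
    rw [hε_def, Finset.lt_inf'_iff]
    intro j _
    have h1 := hstrict j
    have h2 : (0:ℝ) < |ipair (a j) d| + 1 := by positivity
    exact div_pos (by linarith) h2
  have hmem : ∀ j, β j ≤ ipair (a j) (w - ε • d) := by
    intro j
    rw [ipair_sub, ipair_smul]
    have h1 : ε ≤ (ipair (a j) w - β j) / (|ipair (a j) d| + 1) :=
      Finset.inf'_le _ (Finset.mem_univ j)
    have h2 : (0:ℝ) < |ipair (a j) d| + 1 := by positivity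
    rw [le_div_iff₀ h2] at h1
    have h3 : ε * ipair (a j) d ≤ ε * |ipair (a j) d| :=
      mul_le_mul_of_nonneg_left (le_abs_self _) hεpos.le
    nlinarith
  have h4 := hvalid _ hmem
  rw [ipair_sub, ipair_smul, htight] at h4
  nlinarith

lemma setDim_empty : setDim (∅ : Set (Fin n → ℝ)) = 0 := by
  unfold setDim
  rw [vectorSpan_empty]
  exact finrank_bot ℝ _

lemma facet_corr {M : ℕ} (hM : 0 < M) (a : Fin M → Fin n → ℤ) (β : Fin M → ℝ)
    (hprim : ∀ j, IsPrimitive (a j)) {c : Fin n → ℤ} {γ : ℝ} (hcprim : IsPrimitive c)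
    (hn : 2 ≤ n)
    (hQdim : setDim {x : Fin n → ℝ | ∀ j, β j ≤ ipair (a j) x} = n)
    (hvalid : ∀ x, (∀ j, β j ≤ ipair (a j) x) → γ ≤ ipair c x)
    (hGdim : setDim {x : Fin n → ℝ | (∀ j, β j ≤ ipair (a j) x) ∧ ipair c x = γ} + 1 = n) :
    ∃ j, a j = c ∧ β j = γ := by
  classical
  set Q : Set (Fin n → ℝ) := {x | ∀ j, β j ≤ ipair (a j) x} with hQ_def
  set G : Set (Fin n → ℝ) := {x | (∀ j, β j ≤ ipair (a j) x) ∧ ipair c x = γ} with hG_def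
  have hGne : G.Nonempty := by
    rw [Set.nonempty_iff_ne_empty]
    intro hemp
    rw [hemp, setDim_empty] at hGdim
    omega
  have hGconv : Convex ℝ G := by
    rintro x ⟨hx1, hx2⟩ y ⟨hy1, hy2⟩ p q hp hq hpq
    constructor
    · intro j
      have hcomb : ipair (a j) (p • x + q • y) = p * ipair (a j) x + q * ipair (a j) y := by
        rw [ipair_add, ipair_smul, ipair_smul]
      rw [hcomb]
      have h1 := hx1 j
      have h2 := hy1 j
      have h3 := mul_le_mul_of_nonneg_left h1 hp
      have h4 := mul_le_mul_of_nonneg_left h2 hq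
      have h5 : p * β j + q * β j = β j := by rw [← add_mul, hpq, one_mul]
      linarith
    · have hcomb : ipair c (p • x + q • y) = p * ipair c x + q * ipair c y := by
        rw [ipair_add, ipair_smul, ipair_smul]
      rw [hcomb, hx2, hy2, ← add_mul, hpq, one_mul]
  obtain ⟨w, hwG, hw⟩ := exists_generic hGconv hGne a β (fun j x hx => hx.1 j)
  have hex : ∃ j₀, ipair (a j₀) w = β j₀ := by
    by_contra hno
    push_neg at hno
    have hstrict : ∀ j, β j < ipair (a j) w :=
      fun j => lt_of_le_of_ne (hwG.1 j) (Ne.symm (hno j))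
    exact not_valid_tight_of_strict hM a β hcprim.1 hstrict hvalid hwG.2
  obtain ⟨j₀, hj₀⟩ := hex
  have htightG : ∀ x ∈ G, ipair (a j₀) x = β j₀ := hw j₀ hj₀
  have hcG : ∀ x ∈ G, ipair c x = γ := fun x hx => hx.2
  obtain ⟨q, hq0, hq⟩ := exists_ratio (F := G) (a := c) (a' := a j₀)
    hGdim hcprim.1 (hprim j₀).1 hcG htightG
  obtain ⟨p, hpQ, hpne⟩ : ∃ p ∈ Q, ipair (a j₀) p ≠ β j₀ := by
    by_contra hno
    push_neg at hno
    have hle := vectorSpan_le_ker (S := Q) (a := a j₀) (β := β j₀) hno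
    have h1 := finrank_ker_lf (ipairL_ne_zero (hprim j₀).1)
    have h2 : Module.finrank ℝ (vectorSpan ℝ Q)
        ≤ Module.finrank ℝ (LinearMap.ker (ipairL (a j₀))) := Submodule.finrank_mono hle
    have h3 : setDim Q = Module.finrank ℝ (vectorSpan ℝ Q) := rfl
    rw [h3] at hQdim
    omega
  have hppos : β j₀ < ipair (a j₀) p := lt_of_le_of_ne (hpQ j₀) (Ne.symm hpne)
  have hγp : γ ≤ ipair c p := hvalid p hpQ
  have hγw : γ = q * β j₀ := by rw [← hwG.2, hq w, hj₀]
  have hqpos : 0 < q := by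
    rcases lt_or_gt_of_ne hq0 with hneg | hpos
    · exfalso
      have e1 : ipair c p - γ = q * (ipair (a j₀) p - β j₀) := by
        rw [hq p, hγw]; ring
      nlinarith
    · exact hpos
  have hcoord : ∀ i, (c i : ℝ) = q * ((a j₀) i : ℝ) := by
    intro i
    have h5 := hq (Pi.single i 1)
    rwa [ipair_single, ipair_single] at h5
  have hceq : c = a j₀ := hcprim.eq_of_smul (hprim j₀) hqpos hcoord
  refine ⟨j₀, hceq.symm, ?_⟩
  rw [← hj₀, ← hceq]
  exact hwG.2

end AuxGeom

section Cone
set_option linter.unusedSectionVars false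

variable {E : Type*} [NormedAddCommGroup E] [NormedSpace ℝ E] [FiniteDimensional ℝ E]

/-- The convex cone generated by finitely many vectors. -/
def coneOf {M : ℕ} (v : Fin M → E) : Set E :=
  {z | ∃ lam : Fin M → ℝ, (∀ i, 0 ≤ lam i) ∧ z = ∑ i, lam i • v i}

lemma zero_mem_coneOf {M : ℕ} (v : Fin M → E) : 0 ∈ coneOf v :=
  ⟨0, fun _ => le_refl 0, by simp⟩

lemma smul_mem_coneOf {M : ℕ} (v : Fin M → E) (i : Fin M) {t : ℝ} (ht : 0 ≤ t) :
    t • v i ∈ coneOf v := by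
  classical
  refine ⟨fun j => if j = i then t else 0, fun j => by dsimp; split <;> simp [ht], ?_⟩
  simp [ite_smul]

lemma convex_coneOf {M : ℕ} (v : Fin M → E) : Convex ℝ (coneOf v) := by
  rintro x ⟨lx, hlx, rfl⟩ y ⟨ly, hly, rfl⟩ p q hp hq _
  refine ⟨fun i => p * lx i + q * ly i, fun i => by
    have := hlx i; have := hly i; positivity, ?_⟩
  rw [Finset.smul_sum, Finset.smul_sum, ← Finset.sum_add_distrib]
  exact Finset.sum_congr rfl fun i _ => by rw [add_smul, mul_smul, mul_smul]

lemma carath_aux {M : ℕ} (v : Fin M → E) :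
    ∀ (N : ℕ) (σ : Finset (Fin M)) (lam : Fin M → ℝ), σ.card ≤ N → (∀ i, 0 ≤ lam i) →
      ∃ (τ : Finset (Fin M)) (lam' : Fin M → ℝ), (∀ i, 0 ≤ lam' i) ∧
        (∑ i ∈ τ, lam' i • v i) = (∑ i ∈ σ, lam i • v i) ∧
        LinearIndependent ℝ (fun i : τ => v i) := by
  classical
  intro N
  induction N with
  | zero =>
    intro σ lam hcard _
    have hσ : σ = ∅ := Finset.card_eq_zero.mp (Nat.le_zero.mp hcard)
    subst hσ
    haveI : IsEmpty ((∅ : Finset (Fin M)) : Type) := ⟨fun i => Finset.notMem_empty _ i.2⟩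
    exact ⟨∅, 0, fun _ => le_refl 0, by simp, linearIndependent_empty_type⟩
  | succ N ih =>
    intro σ lam hcard hpos
    by_cases hli : LinearIndependent ℝ (fun i : σ => v i)
    · exact ⟨σ, lam, hpos, rfl, hli⟩
    · obtain ⟨g, hg0, i₁, hgi₁⟩ := Fintype.not_linearIndependent_iff.mp hli
      have hmuex : ∃ mu : Fin M → ℝ, (∀ i ∉ σ, mu i = 0) ∧ ((∑ i ∈ σ, mu i • v i) = 0) ∧
          ∃ i₂ ∈ σ, 0 < mu i₂ := by
        rcases (show g i₁ ≠ 0 from hgi₁).lt_or_gt with hneg | hsign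
        · refine ⟨fun i => if h : i ∈ σ then -g ⟨i, h⟩ else 0, fun i hi => dif_neg hi, ?_,
            i₁, i₁.2, by
              show 0 < if h : (↑i₁ : Fin M) ∈ σ then -g ⟨↑i₁, h⟩ else 0
              rw [dif_pos i₁.2]; exact neg_pos.mpr hneg⟩
          have h1 : ∑ i ∈ σ, (if h : i ∈ σ then -g ⟨i, h⟩ else 0) • v i
              = ∑ i : σ, -g i • v ↑i := by
            rw [← Finset.sum_coe_sort σ (fun i => (if h : i ∈ σ then -g ⟨i, h⟩ else 0) • v i)]
            exact Finset.sum_congr rfl fun i _ => by rw [dif_pos i.2]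
          rw [h1]
          simp only [neg_smul]
          rw [Finset.sum_neg_distrib, hg0, neg_zero]
        · refine ⟨fun i => if h : i ∈ σ then g ⟨i, h⟩ else 0, fun i hi => dif_neg hi, ?_,
            i₁, i₁.2, by
              show 0 < if h : (↑i₁ : Fin M) ∈ σ then g ⟨↑i₁, h⟩ else 0
              rw [dif_pos i₁.2]; exact hsign⟩
          have h1 : ∑ i ∈ σ, (if h : i ∈ σ then g ⟨i, h⟩ else 0) • v i
              = ∑ i : σ, g i • v ↑i := by
            rw [← Finset.sum_coe_sort σ (fun i => (if h : i ∈ σ then g ⟨i, h⟩ else 0) • v i)]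
            exact Finset.sum_congr rfl fun i _ => by rw [dif_pos i.2]
          rw [h1, hg0]
      obtain ⟨mu, hmusupp, hmu0, i₂, hi₂σ, hi₂⟩ := hmuex
      set J : Finset (Fin M) := σ.filter (fun i => 0 < mu i) with hJ_def
      have hJ : J.Nonempty := ⟨i₂, Finset.mem_filter.mpr ⟨hi₂σ, hi₂⟩⟩
      obtain ⟨i₀, hi₀J, hi₀min⟩ := Finset.exists_min_image J (fun i => lam i / mu i) hJ
      have hi₀σ : i₀ ∈ σ := (Finset.mem_filter.mp hi₀J).1
      have hμi₀ : 0 < mu i₀ := (Finset.mem_filter.mp hi₀J).2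
      set t : ℝ := lam i₀ / mu i₀ with ht_def
      have ht : 0 ≤ t := div_nonneg (hpos i₀) hμi₀.le
      set lam'' : Fin M → ℝ := fun i => lam i - t * mu i with hlam''_def
      have hlam''pos : ∀ i, 0 ≤ lam'' i := by
        intro i
        simp only [hlam''_def]
        by_cases hiσ : i ∈ σ
        · rcases le_or_gt (mu i) 0 with hmi | hmi
          · have h2 := mul_nonneg ht (neg_nonneg.mpr hmi)
            have h3 := hpos i
            nlinarith
          · have hiJ : i ∈ J := Finset.mem_filter.mpr ⟨hiσ, hmi⟩
            have h1 := hi₀min i hiJ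
            rw [ht_def, div_le_div_iff₀ hμi₀ hmi] at h1
            rw [ht_def, div_mul_eq_mul_div, sub_nonneg, div_le_iff₀ hμi₀]
            linarith
        · rw [hmusupp i hiσ]
          simpa using hpos i
      have hsum'' : ∑ i ∈ σ, lam'' i • v i = ∑ i ∈ σ, lam i • v i := by
        simp only [hlam''_def, sub_smul, mul_smul]
        rw [Finset.sum_sub_distrib, ← Finset.smul_sum, hmu0, smul_zero, sub_zero]
      have hzero : lam'' i₀ = 0 := by
        simp only [hlam''_def, ht_def]
        rw [div_mul_cancel₀ _ hμi₀.ne']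
        exact sub_self _
      have hcard' : (σ.erase i₀).card ≤ N := by
        have h5 := Finset.card_erase_of_mem hi₀σ
        have h6 : 0 < σ.card := Finset.card_pos.mpr ⟨i₀, hi₀σ⟩
        omega
      obtain ⟨τ, lam', h1, h2, h3⟩ := ih (σ.erase i₀) lam'' hcard' hlam''pos
      refine ⟨τ, lam', h1, ?_, h3⟩
      rw [h2, Finset.sum_erase σ (by rw [hzero, zero_smul]), hsum'']

lemma isClosed_coneOf {M : ℕ} (v : Fin M → E) : IsClosed (coneOf v) := by
  classical
  have hrep : coneOf v = ⋃ τ : Finset (Fin M),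
      {z | LinearIndependent ℝ (fun i : τ => v i) ∧
        ∃ lam : Fin M → ℝ, (∀ i, 0 ≤ lam i) ∧ z = ∑ i ∈ τ, lam i • v i} := by
    ext z
    constructor
    · rintro ⟨lam, hpos, rfl⟩
      obtain ⟨τ, lam', h1, h2, h3⟩ :=
        carath_aux v Finset.univ.card Finset.univ lam le_rfl hpos
      exact Set.mem_iUnion.mpr ⟨τ, h3, lam', h1, h2.symm⟩
    · rintro hz
      obtain ⟨τ, _, lam, hpos, rfl⟩ := Set.mem_iUnion.mp hz
      refine ⟨fun i => if i ∈ τ then lam i else 0,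
        fun i => by dsimp; split <;> simp [hpos i], ?_⟩
      rw [show (∑ i, (if i ∈ τ then lam i else 0) • v i)
          = ∑ i, (if i ∈ τ then lam i • v i else 0) by
        exact Finset.sum_congr rfl fun i _ => by split <;> simp]
      rw [Finset.sum_ite_mem, Finset.univ_inter]
  rw [hrep]
  refine isClosed_iUnion_of_finite fun τ => ?_
  by_cases hli : LinearIndependent ℝ (fun i : τ => v i)
  · let L : (↥τ → ℝ) →ₗ[ℝ] E :=
      { toFun := fun c => ∑ i : τ, c i • v ↑i
        map_add' := fun c d => by simp [add_smul, Finset.sum_add_distrib]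
        map_smul' := fun r c => by simp [Finset.smul_sum, smul_smul] }
    have hLinj : LinearMap.ker L = ⊥ := by
      rw [LinearMap.ker_eq_bot']
      intro c hc
      funext i
      exact Fintype.linearIndependent_iff.mp hli c hc i
    have hK : IsClosed {c : ↥τ → ℝ | ∀ i, 0 ≤ c i} := by
      have h7 : {c : ↥τ → ℝ | ∀ i, 0 ≤ c i} = ⋂ i, {c | 0 ≤ c i} := by
        ext; simp [Set.mem_iInter]
      rw [h7]
      exact isClosed_iInter fun i => isClosed_le continuous_const (continuous_apply i)
    have himg : IsClosed (⇑L '' {c : ↥τ → ℝ | ∀ i, 0 ≤ c i}) :=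
      (LinearMap.isClosedEmbedding_of_injective hLinj).isClosedMap _ hK
    have hEq : {z | LinearIndependent ℝ (fun i : τ => v i) ∧
        ∃ lam : Fin M → ℝ, (∀ i, 0 ≤ lam i) ∧ z = ∑ i ∈ τ, lam i • v i}
        = ⇑L '' {c : ↥τ → ℝ | ∀ i, 0 ≤ c i} := by
      ext z
      simp only [Set.mem_setOf_eq, Set.mem_image]
      constructor
      · rintro ⟨-, lam, hpos, rfl⟩
        refine ⟨fun i => lam ↑i, fun i => hpos _, ?_⟩
        show (∑ i : τ, lam ↑i • v ↑i) = ∑ i ∈ τ, lam i • v i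
        exact Finset.sum_coe_sort τ (fun i => lam i • v i)
      · rintro ⟨c, hc, rfl⟩
        refine ⟨hli, fun i => if h : i ∈ τ then c ⟨i, h⟩ else 0,
          fun i => by dsimp; split <;> [exact hc _; exact le_rfl], ?_⟩
        show L c = ∑ i ∈ τ, (if h : i ∈ τ then c ⟨i, h⟩ else 0) • v i
        rw [show L c = ∑ i : τ, c i • v ↑i from rfl,
          ← Finset.sum_coe_sort τ (fun i => (if h : i ∈ τ then c ⟨i, h⟩ else 0) • v i)]
        exact Finset.sum_congr rfl fun i _ => by rw [dif_pos i.2]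
    rw [hEq]
    exact himg
  · have hEq : {z | LinearIndependent ℝ (fun i : τ => v i) ∧
        ∃ lam : Fin M → ℝ, (∀ i, 0 ≤ lam i) ∧ z = ∑ i ∈ τ, lam i • v i} = ∅ := by
      ext z
      simp only [Set.mem_setOf_eq, Set.mem_empty_iff_false, iff_false]
      rintro ⟨h, -⟩
      exact hli h
    rw [hEq]
    exact isClosed_empty

lemma farkas_sep {M : ℕ} (v : Fin M → E) (c : E) (h : c ∉ coneOf v) :
    ∃ f : E →L[ℝ] ℝ, (∀ i, f (v i) ≤ 0) ∧ 0 < f c := by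
  obtain ⟨f, u, hfu, hc⟩ :=
    geometric_hahn_banach_closed_point (convex_coneOf v) (isClosed_coneOf v) h
  have h0 : (0:ℝ) < u := by simpa using hfu 0 (zero_mem_coneOf v)
  refine ⟨f, fun i => ?_, lt_trans h0 hc⟩
  by_contra hpos
  push_neg at hpos
  have hmem := smul_mem_coneOf v i (t := (u+1)/f (v i)) (by positivity)
  have h8 := hfu _ hmem
  rw [map_smul, smul_eq_mul, div_mul_cancel₀ _ hpos.ne'] at h8
  linarith

end Cone

section Cert

variable {n : ℕ}

lemma pi_decomp (z : Fin n → ℝ) : ∑ i, z i • (Pi.single i 1 : Fin n → ℝ) = z := by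
  have h1 : ∀ i, z i • (Pi.single i 1 : Fin n → ℝ) = Pi.single i (z i) := by
    intro i
    funext k
    simp [Pi.single_apply, mul_ite]
  simp only [h1]
  exact Finset.univ_sum_single z

/-- Farkas' lemma: a valid inequality for a nonempty polyhedron is a nonnegative
combination of the defining inequalities. -/
lemma exists_cert {M : ℕ} (a : Fin M → Fin n → ℤ) (β : Fin M → ℝ)
    (c : Fin n → ℤ) (γ : ℝ) (hQne : ∃ q : Fin n → ℝ, ∀ j, β j ≤ ipair (a j) q)
    (hvalid : ∀ x, (∀ j, β j ≤ ipair (a j) x) → γ ≤ ipair c x) :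
    ∃ lam : Fin M → ℝ, (∀ j, 0 ≤ lam j) ∧
      (∀ i : Fin n, (c i : ℝ) = ∑ j, lam j * (a j i : ℝ)) ∧
      γ ≤ ∑ j, lam j * β j := by
  classical
  set v : Fin (M+1) → (Fin n → ℝ) × ℝ :=
    Fin.snoc (fun j => ((fun i => ((a j i : ℝ))), β j)) ((0 : Fin n → ℝ), (-1 : ℝ)) with hv_def
  set cz : (Fin n → ℝ) × ℝ := ((fun i => ((c i : ℝ))), γ) with hcz_def
  by_cases hmem : cz ∈ coneOf v
  · obtain ⟨lam, hpos, hsum⟩ := hmem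
    rw [Fin.sum_univ_castSucc] at hsum
    simp only [hv_def, Fin.snoc_castSucc, Fin.snoc_last] at hsum
    refine ⟨fun j => lam (Fin.castSucc j), fun j => hpos _, ?_, ?_⟩
    · intro i
      have h1 := congrArg (fun z => z.1 i) hsum
      simp only [Prod.fst_add, Prod.smul_fst, Prod.fst_sum, smul_zero,
        Finset.sum_apply, Pi.add_apply, Pi.smul_apply, smul_eq_mul, Pi.zero_apply,
        add_zero, mul_zero] at h1
      exact h1
    · have h2 := congrArg (fun z => z.2) hsum
      simp only [Prod.snd_add, Prod.smul_snd, Prod.snd_sum, smul_eq_mul,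
        mul_neg, mul_one] at h2
      have h3 := hpos (Fin.last M)
      rw [show γ = cz.2 from rfl, h2]
      linarith
  · exfalso
    obtain ⟨f, hfv, hfc⟩ := farkas_sep v cz hmem
    set τ : ℝ := f ((0 : Fin n → ℝ), (1 : ℝ)) with hτ_def
    have hτ : 0 ≤ τ := by
      have h1 := hfv (Fin.last M)
      rw [hv_def] at h1
      simp only [Fin.snoc_last] at h1
      have h2 : ((0 : Fin n → ℝ), (-1 : ℝ)) = -((0 : Fin n → ℝ), (1 : ℝ)) := by
        simp [Prod.ext_iff]
      rw [h2, map_neg] at h1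
      linarith
    set x' : Fin n → ℝ := fun i => -(f ((Pi.single i 1 : Fin n → ℝ), 0)) with hx'_def
    have key : ∀ (d : Fin n → ℤ) (δ : ℝ),
        f ((fun i => ((d i : ℝ))), δ) = -(ipair d x') + δ * τ := by
      intro d δ
      have hdec : ((fun i => ((d i : ℝ))), δ)
          = (∑ i, (d i : ℝ) • ((Pi.single i 1 : Fin n → ℝ), (0:ℝ))) + δ • ((0 : Fin n → ℝ), 1) := by
        rw [Prod.ext_iff]
        constructor
        · simp only [Prod.fst_add, Prod.fst_sum, Prod.smul_fst, smul_zero, add_zero]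
          exact (pi_decomp _).symm
        · simp only [Prod.snd_add, Prod.snd_sum, Prod.smul_snd, smul_zero, smul_eq_mul,
            mul_one, mul_zero, Finset.sum_const_zero, zero_add]
      rw [hdec, map_add, map_sum]
      simp only [map_smul, smul_eq_mul]
      rw [← hτ_def]
      congr 1
      · rw [ipair, hx'_def]
        rw [← Finset.sum_neg_distrib]
        exact Finset.sum_congr rfl fun i _ => by ring
    have hvj : ∀ j : Fin M, β j * τ ≤ ipair (a j) x' := by
      intro j
      have h1 := hfv (Fin.castSucc j)
      rw [hv_def] at h1
      simp only [Fin.snoc_castSucc] at h1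
      rw [key (a j) (β j)] at h1
      linarith
    have hvc : ipair c x' < γ * τ := by
      have h1 := hfc
      rw [hcz_def, key c γ] at h1
      linarith
    rcases eq_or_lt_of_le hτ with hτ0 | hτpos
    · -- τ = 0 : unbounded direction
      obtain ⟨q, hq⟩ := hQne
      have hcx : ipair c x' < 0 := by rw [← hτ0] at hvc; simpa using hvc
      have hγq : γ ≤ ipair c q := hvalid q hq
      set T : ℝ := (ipair c q - γ + 1) / (-(ipair c x')) with hT_def
      have hT : 0 ≤ T := div_nonneg (by linarith) (by linarith)
      have hmem2 : ∀ j, β j ≤ ipair (a j) (q + T • x') := by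
        intro j
        rw [ipair_add, ipair_smul]
        have h2 : 0 ≤ ipair (a j) x' := by
          have := hvj j
          rw [← hτ0] at this
          simpa using this
        have h3 : 0 ≤ T * ipair (a j) x' := mul_nonneg hT h2
        have h4 := hq j
        linarith
      have h5 := hvalid _ hmem2
      rw [ipair_add, ipair_smul] at h5
      have h6 : T * (-(ipair c x')) = ipair c q - γ + 1 :=
        div_mul_cancel₀ _ (by linarith : -(ipair c x') ≠ 0)
      linarith
    · -- τ > 0
      set p : Fin n → ℝ := τ⁻¹ • x' with hp_def
      have hmem2 : ∀ j, β j ≤ ipair (a j) p := by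
        intro j
        rw [hp_def, ipair_smul]
        have h2 := hvj j
        have h3 : τ⁻¹ * (β j * τ) ≤ τ⁻¹ * ipair (a j) x' :=
          mul_le_mul_of_nonneg_left h2 (inv_nonneg.mpr hτ)
        rw [mul_comm (β j) τ, ← mul_assoc, inv_mul_cancel₀ hτpos.ne', one_mul] at h3
        exact h3
      have h5 := hvalid p hmem2
      rw [hp_def, ipair_smul] at h5
      have h3 : τ⁻¹ * ipair c x' < τ⁻¹ * (γ * τ) :=
        mul_lt_mul_of_pos_left hvc (inv_pos.mpr hτpos)
      rw [mul_comm γ τ, ← mul_assoc, inv_mul_cancel₀ hτpos.ne', one_mul] at h3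
      linarith

end Cert

section OneD

lemma setDim_pos_nonempty {n : ℕ} {S : Set (Fin n → ℝ)} (h : 0 < setDim S) : S.Nonempty := by
  rw [Set.nonempty_iff_ne_empty]
  intro he
  rw [he, setDim_empty] at h
  omega

lemma PolyDesc.mem_adj_iff {n m : ℕ} (D : PolyDesc n m) (t : ℝ) (x : Fin n → ℝ) :
    x ∈ D.adj t ↔ ∀ i, (D.b i : ℝ) + t ≤ ipair (D.A i) x := by
  show t ≤ D.dist x ↔ _
  unfold PolyDesc.dist
  rw [Finset.le_inf'_iff]
  constructor
  · intro h i
    have h1 := h i (Finset.mem_univ i)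
    unfold PolyDesc.dF at h1
    linarith
  · intro h i _
    unfold PolyDesc.dF
    have h1 := h i
    linarith

lemma oneD {n M : ℕ} (hn : n = 1) (a : Fin M → Fin n → ℤ) (β : Fin M → ℝ)
    (hprim : ∀ j, IsPrimitive (a j))
    (hbd : Bornology.IsBounded {x : Fin n → ℝ | ∀ j, β j ≤ ipair (a j) x})
    (hne : {x : Fin n → ℝ | ∀ j, β j ≤ ipair (a j) x}.Nonempty)
    {c : Fin n → ℤ} {γ : ℝ} (hc : IsPrimitive c)
    (hvalid : ∀ x, (∀ j, β j ≤ ipair (a j) x) → γ ≤ ipair c x)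
    {r : ℝ} (hr : 0 ≤ r) {x : Fin n → ℝ} (hx : ∀ j, β j + r ≤ ipair (a j) x) :
    γ + r ≤ ipair c x := by
  classical
  have hnpos : 0 < n := by omega
  set j₀ : Fin n := ⟨0, hnpos⟩ with hj₀_def
  have hall : ∀ j : Fin n, j = j₀ := fun j => Fin.ext (by have := j.isLt; omega)
  have hip : ∀ (d : Fin n → ℤ) (y : Fin n → ℝ), ipair d y = (d j₀ : ℝ) * y j₀ := by
    intro d y
    exact Finset.sum_eq_single j₀ (fun b _ hb => absurd (hall b) hb)
      (fun hb => absurd (Finset.mem_univ j₀) hb)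
  have hsign : ∀ (d : Fin n → ℤ), IsPrimitive d → d j₀ = 1 ∨ d j₀ = -1 := by
    intro d hd
    have h1 : d = (d j₀) • (fun _ => (1:ℤ)) := by
      funext j
      rw [hall j]
      simp
    exact Int.isUnit_iff.mp (hd.2 (d j₀) _ h1)
  obtain ⟨q₀, hq₀⟩ := hne
  obtain ⟨C, hC⟩ := isBounded_iff_forall_norm_le.mp hbd
  have hC0 : 0 ≤ C := le_trans (norm_nonneg q₀) (hC q₀ hq₀)
  rcases hsign c hc with hcs | hcs
  · -- c j₀ = 1
    have hgoal : ipair c x = x j₀ := by rw [hip, hcs]; simp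
    rw [hgoal]
    set J : Finset (Fin M) := Finset.univ.filter (fun j => a j j₀ = 1) with hJ_def
    have hJne : J.Nonempty := by
      by_contra hJe
      rw [Finset.not_nonempty_iff_eq_empty] at hJe
      have hneg : ∀ j, a j j₀ = -1 := by
        intro j
        rcases hsign (a j) (hprim j) with h1 | h1
        · exfalso
          have h2 : j ∈ J := Finset.mem_filter.mpr ⟨Finset.mem_univ j, h1⟩
          rw [hJe] at h2
          exact Finset.notMem_empty j h2
        · exact h1
      set t : ℝ := |q₀ j₀| + C + 1 with ht_def
      have ht0 : 0 ≤ t := by positivity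
      have hyQ : (fun _ => q₀ j₀ - t : Fin n → ℝ) ∈ {x : Fin n → ℝ | ∀ j, β j ≤ ipair (a j) x} := by
        intro j
        rw [hip, hneg j]
        have h1 := hq₀ j
        rw [hip, hneg j] at h1
        push_cast at h1 ⊢
        linarith
      have h2 := hC _ hyQ
      have h3 : |q₀ j₀ - t| ≤ ‖(fun _ => q₀ j₀ - t : Fin n → ℝ)‖ := by
        have h3a := norm_le_pi_norm (fun _ => q₀ j₀ - t : Fin n → ℝ) j₀
        simpa [Real.norm_eq_abs] using h3a
      have h4 : |t - q₀ j₀| ≤ C := by rw [abs_sub_comm]; linarith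
      have h5 : t - q₀ j₀ ≤ |t - q₀ j₀| := le_abs_self _
      have h6 : q₀ j₀ ≤ |q₀ j₀| := le_abs_self _
      linarith
    obtain ⟨jm, hjmJ, hjm⟩ := Finset.exists_max_image J β hJne
    have hjm1 : a jm j₀ = 1 := (Finset.mem_filter.mp hjmJ).2
    have hq₀jm : β jm ≤ q₀ j₀ := by
      have h3 := hq₀ jm
      rw [hip, hjm1] at h3
      push_cast at h3
      linarith
    have hxhat : (fun _ => β jm : Fin n → ℝ) ∈ {x : Fin n → ℝ | ∀ j, β j ≤ ipair (a j) x} := by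
      intro j
      rcases hsign (a j) (hprim j) with h1 | h1
      · rw [hip, h1]
        push_cast
        rw [one_mul]
        exact hjm j (Finset.mem_filter.mpr ⟨Finset.mem_univ j, h1⟩)
      · rw [hip, h1]
        have h2 := hq₀ j
        rw [hip, h1] at h2
        push_cast at h2 ⊢
        linarith
    have hγ : γ ≤ β jm := by
      have h1 := hvalid _ hxhat
      rw [hip, hcs] at h1
      push_cast at h1
      linarith
    have h2 := hx jm
    rw [hip, hjm1] at h2
    push_cast at h2
    linarith
  · -- c j₀ = -1
    have hgoal : ipair c x = -(x j₀) := by rw [hip, hcs]; push_cast; ring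
    rw [hgoal]
    set J : Finset (Fin M) := Finset.univ.filter (fun j => a j j₀ = -1) with hJ_def
    have hJne : J.Nonempty := by
      by_contra hJe
      rw [Finset.not_nonempty_iff_eq_empty] at hJe
      have hneg : ∀ j, a j j₀ = 1 := by
        intro j
        rcases hsign (a j) (hprim j) with h1 | h1
        · exact h1
        · exfalso
          have h2 : j ∈ J := Finset.mem_filter.mpr ⟨Finset.mem_univ j, h1⟩
          rw [hJe] at h2
          exact Finset.notMem_empty j h2
      set t : ℝ := |q₀ j₀| + C + 1 with ht_def
      have ht0 : 0 ≤ t := by positivity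
      have hyQ : (fun _ => q₀ j₀ + t : Fin n → ℝ) ∈ {x : Fin n → ℝ | ∀ j, β j ≤ ipair (a j) x} := by
        intro j
        rw [hip, hneg j]
        have h1 := hq₀ j
        rw [hip, hneg j] at h1
        push_cast at h1 ⊢
        linarith
      have h2 := hC _ hyQ
      have h3 : |q₀ j₀ + t| ≤ ‖(fun _ => q₀ j₀ + t : Fin n → ℝ)‖ := by
        have h3a := norm_le_pi_norm (fun _ => q₀ j₀ + t : Fin n → ℝ) j₀
        simpa [Real.norm_eq_abs] using h3a
      have h5 : q₀ j₀ + t ≤ |q₀ j₀ + t| := le_abs_self _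
      have h6 : -(q₀ j₀) ≤ |q₀ j₀| := neg_le_abs _
      linarith
    obtain ⟨jm, hjmJ, hjm⟩ := Finset.exists_max_image J β hJne
    have hjm1 : a jm j₀ = -1 := (Finset.mem_filter.mp hjmJ).2
    have hq₀jm : β jm ≤ -(q₀ j₀) := by
      have h3 := hq₀ jm
      rw [hip, hjm1] at h3
      push_cast at h3
      linarith
    have hxhat : (fun _ => -(β jm) : Fin n → ℝ) ∈ {x : Fin n → ℝ | ∀ j, β j ≤ ipair (a j) x} := by
      intro j
      rcases hsign (a j) (hprim j) with h1 | h1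
      · rw [hip, h1]
        have h2 := hq₀ j
        rw [hip, h1] at h2
        push_cast at h2 ⊢
        linarith
      · rw [hip, h1]
        push_cast
        have h2 : (-1 : ℝ) * -(β jm) = β jm := by ring
        rw [h2]
        exact hjm j (Finset.mem_filter.mpr ⟨Finset.mem_univ j, h1⟩)
    have hγ : γ ≤ β jm := by
      have h1 := hvalid _ hxhat
      rw [hip, hcs] at h1
      push_cast at h1
      linarith
    have h2 := hx jm
    rw [hip, hjm1] at h2
    push_cast at h2
    linarith

end OneD

/-- Let `s ≥ 0`. (i) If `P⁽ˢ⁾` has dimension `n`, then, computing the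
adjoint of `P⁽ˢ⁾` with respect to any irredundant facet description `D'` of `P⁽ˢ⁾`,
one has `(P⁽ˢ⁾)⁽ʳ⁾ = P⁽ˢ⁺ʳ⁾` for every `r ≥ 0`. (ii) For every real `r > 0` one has
`r • P⁽ˢ⁾ = (rP)⁽ʳˢ⁾`, where `rP` has the facet description `{x : ⟨aᵢ, x⟩ ≥ r bᵢ}`,
so that `(rP)⁽ʳˢ⁾ = {x : ⟨aᵢ, x⟩ ≥ r bᵢ + r s for all i}`. -/
theorem statement1 {n m : ℕ} (D : PolyDesc n m) (s : ℝ) (hs : 0 ≤ s) :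
    (setDim (D.adj s) = n →
      ∀ {m' : ℕ} (D' : PolyDesc n m'), D'.pts = D.adj s →
        ∀ r : ℝ, 0 ≤ r → D'.adj r = D.adj (s + r)) ∧
    (∀ r : ℝ, 0 < r →
      r • D.adj s = {x : Fin n → ℝ | ∀ i, r * (D.b i : ℝ) + r * s ≤ ipair (D.A i) x}) := by
  constructor
  · -- Part (i)
    intro hdim m' D' hD' r hr
    have hn1 : 1 ≤ n := by
      by_contra hn0
      have h0 : n = 0 := by omega
      subst h0
      exact (D.prim ⟨0, D.hm⟩).1 (funext fun j => j.elim0)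
    have hQset : D.adj s = {x : Fin n → ℝ | ∀ i, (D.b i : ℝ) + s ≤ ipair (D.A i) x} := by
      ext x; exact D.mem_adj_iff s x
    have hQD' : D'.pts = {x : Fin n → ℝ | ∀ i, (D.b i : ℝ) + s ≤ ipair (D.A i) x} := by
      rw [hD', hQset]
    have hQdim : setDim {x : Fin n → ℝ | ∀ i, (D.b i : ℝ) + s ≤ ipair (D.A i) x} = n := by
      rw [← hQset]; exact hdim
    have hQne : {x : Fin n → ℝ | ∀ i, (D.b i : ℝ) + s ≤ ipair (D.A i) x}.Nonempty :=
      setDim_pos_nonempty (by omega)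
    have hbdQ : Bornology.IsBounded {x : Fin n → ℝ | ∀ i, (D.b i : ℝ) + s ≤ ipair (D.A i) x} :=
      D.bounded.subset (fun x hx i => by have := hx i; linarith)
    have hvalid' : ∀ k, ∀ x, (∀ i, (D.b i : ℝ) + s ≤ ipair (D.A i) x) →
        (D'.b k : ℝ) ≤ ipair (D'.A k) x := by
      intro k x hxQ
      have hxP : x ∈ D'.pts := by rw [hQD']; exact hxQ
      exact hxP k
    have hvalidD : ∀ i, ∀ x, (∀ k, (D'.b k : ℝ) ≤ ipair (D'.A k) x) →
        (D.b i : ℝ) + s ≤ ipair (D.A i) x := by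
      intro i x hxQ
      have hxP : x ∈ D'.pts := hxQ
      rw [hQD'] at hxP
      exact hxP i
    have hneD' : D'.pts.Nonempty := by rw [hQD']; exact hQne
    ext x
    rw [D'.mem_adj_iff, D.mem_adj_iff]
    rcases lt_or_ge n 2 with hn2 | hn2
    · -- n = 1
      have hn : n = 1 := by omega
      constructor
      · intro hx i
        have h1 := oneD hn D'.A (fun k => (D'.b k : ℝ)) D'.prim D'.bounded hneD'
          (D.prim i) (hvalidD i) hr hx
        linarith
      · intro hx k
        have h1 := oneD hn D.A (fun i => (D.b i : ℝ) + s) D.prim hbdQ hQne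
          (D'.prim k) (hvalid' k) hr (x := x) (fun i => by
            show (D.b i : ℝ) + s + r ≤ ipair (D.A i) x
            have := hx i; linarith)
        linarith
    · -- n ≥ 2
      have hL1 : ∀ k, ∃ i, D.A i = D'.A k ∧ (D.b i : ℝ) + s = (D'.b k : ℝ) := by
        intro k
        have h2 : {y : Fin n → ℝ | (∀ i, (D.b i : ℝ) + s ≤ ipair (D.A i) y) ∧
              ipair (D'.A k) y = (D'.b k : ℝ)}
            = {y : Fin n → ℝ | (∀ j, (D'.b j : ℝ) ≤ ipair (D'.A j) y) ∧
              ipair (D'.A k) y = (D'.b k : ℝ)} := by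
          ext y
          simp only [Set.mem_setOf_eq]
          constructor
          · rintro ⟨hy1, hy2⟩
            exact ⟨fun j => hvalid' j y hy1, hy2⟩
          · rintro ⟨hy1, hy2⟩
            exact ⟨fun i => hvalidD i y hy1, hy2⟩
        have hGdim : setDim {y : Fin n → ℝ | (∀ i, (D.b i : ℝ) + s ≤ ipair (D.A i) y) ∧
            ipair (D'.A k) y = (D'.b k : ℝ)} + 1 = n := by
          rw [h2]
          exact D'.facet_dim k
        exact facet_corr D.hm D.A (fun i => (D.b i : ℝ) + s) D.prim (D'.prim k) hn2
          hQdim (hvalid' k) hGdim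
      constructor
      · -- x ∈ D'.adj r → x ∈ D.adj (s+r)
        intro hx i
        by_cases hdup : ∃ k, D'.A k = D.A i ∧ (D'.b k : ℝ) = (D.b i : ℝ) + s
        · obtain ⟨k, hk1, hk2⟩ := hdup
          have h1 := hx k
          rw [hk1, hk2] at h1
          linarith
        · obtain ⟨lam, hlam, hcoord, hlamb⟩ := exists_cert D'.A (fun k => (D'.b k : ℝ))
            (D.A i) ((D.b i : ℝ) + s)
            ⟨hQne.choose, fun k => hvalid' k _ hQne.choose_spec⟩ (hvalidD i)
          have hsum : ipair (D.A i) x = ∑ k, lam k * ipair (D'.A k) x := by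
            rw [ipair]
            have h1 : ∀ j : Fin n, (D.A i j : ℝ) * x j = ∑ k, lam k * ((D'.A k j : ℝ) * x j) := by
              intro j
              rw [hcoord j, Finset.sum_mul]
              exact Finset.sum_congr rfl fun k _ => by ring
            rw [Finset.sum_congr rfl fun j _ => h1 j, Finset.sum_comm]
            exact Finset.sum_congr rfl fun k _ => by rw [ipair, Finset.mul_sum]
          set T : ℝ := ∑ k, lam k with hT_def
          rcases le_or_gt 1 T with hT | hT
          · have h2 : ∑ k, lam k * ((D'.b k : ℝ) + r) ≤ ∑ k, lam k * ipair (D'.A k) x :=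
              Finset.sum_le_sum fun k _ => mul_le_mul_of_nonneg_left (hx k) (hlam k)
            have h3 : ∑ k, lam k * ((D'.b k : ℝ) + r) = (∑ k, lam k * (D'.b k : ℝ)) + r * T := by
              rw [hT_def, Finset.mul_sum, ← Finset.sum_add_distrib]
              exact Finset.sum_congr rfl fun k _ => by ring
            have h4 : 0 ≤ r * (T - 1) := mul_nonneg hr (by linarith)
            have h5 : r * T = r + r * (T - 1) := by ring
            linarith [hsum, h2, h3, hlamb]
          · exfalso
            choose idx hidx1 hidx2 using hL1
            set F : Set (Fin n → ℝ) := {y | (∀ j, (D.b j : ℝ) ≤ ipair (D.A j) y) ∧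
              ipair (D.A i) y = (D.b i : ℝ)} with hF_def
            have hFdim : setDim F + 1 = n := D.facet_dim i
            have hFne : F.Nonempty := setDim_pos_nonempty (by omega)
            have hkey : ∀ y ∈ F, ∀ k, lam k ≠ 0 →
                ipair (D.A (idx k)) y = (D.b (idx k) : ℝ) := by
              intro y hyF
              have hterm : ∀ k, 0 ≤ lam k * (ipair (D.A (idx k)) y - (D.b (idx k) : ℝ)) := by
                intro k
                apply mul_nonneg (hlam k)
                have := hyF.1 (idx k)
                linarith
              have hsumy : ipair (D.A i) y = ∑ k, lam k * ipair (D.A (idx k)) y := by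
                rw [ipair]
                have h1 : ∀ j : Fin n, (D.A i j : ℝ) * y j
                    = ∑ k, lam k * ((D.A (idx k) j : ℝ) * y j) := by
                  intro j
                  have h5 : (D.A i j : ℝ) = ∑ k, lam k * (D.A (idx k) j : ℝ) := by
                    rw [hcoord j]
                    exact Finset.sum_congr rfl fun k _ => by rw [hidx1 k]
                  rw [h5, Finset.sum_mul]
                  exact Finset.sum_congr rfl fun k _ => by ring
                rw [Finset.sum_congr rfl fun j _ => h1 j, Finset.sum_comm]
                exact Finset.sum_congr rfl fun k _ => by rw [ipair, Finset.mul_sum]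
              have hbb : (D.b i : ℝ) + s ≤ ∑ k, lam k * ((D.b (idx k) : ℝ) + s) := by
                calc (D.b i : ℝ) + s ≤ ∑ k, lam k * (D'.b k : ℝ) := hlamb
                _ = ∑ k, lam k * ((D.b (idx k) : ℝ) + s) :=
                  Finset.sum_congr rfl fun k _ => by rw [hidx2 k]
              have hsplit : ∑ k, lam k * ((D.b (idx k) : ℝ) + s)
                  = (∑ k, lam k * (D.b (idx k) : ℝ)) + s * T := by
                rw [hT_def, Finset.mul_sum, ← Finset.sum_add_distrib]
                exact Finset.sum_congr rfl fun k _ => by ring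
              have hstot : ∑ k, lam k * (ipair (D.A (idx k)) y - (D.b (idx k) : ℝ)) ≤ 0 := by
                have h6 : ∑ k, lam k * (ipair (D.A (idx k)) y - (D.b (idx k) : ℝ))
                    = (∑ k, lam k * ipair (D.A (idx k)) y)
                      - ∑ k, lam k * (D.b (idx k) : ℝ) := by
                  rw [← Finset.sum_sub_distrib]
                  exact Finset.sum_congr rfl fun k _ => by ring
                have h7 : 0 ≤ s * (1 - T) := mul_nonneg hs (by linarith)
                have h8 := hyF.2
                rw [h6, ← hsumy, h8]
                linarith
              have hzero : ∑ k, lam k * (ipair (D.A (idx k)) y - (D.b (idx k) : ℝ)) = 0 :=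
                le_antisymm hstot (Finset.sum_nonneg fun k _ => hterm k)
              intro k hk
              have h9 := (Finset.sum_eq_zero_iff_of_nonneg
                (fun k _ => hterm k)).mp hzero k (Finset.mem_univ k)
              rcases mul_eq_zero.mp h9 with h10 | h10
              · exact absurd h10 hk
              · linarith
            obtain ⟨k₀, hk₀⟩ : ∃ k, lam k ≠ 0 := by
              by_contra hno
              push_neg at hno
              obtain ⟨j, hj⟩ := (D.prim i).exists_coord_ne
              have h11 := hcoord j
              rw [Finset.sum_eq_zero (fun k _ => by rw [hno k, zero_mul])] at h11
              exact hj (by exact_mod_cast h11)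
            set jdx : Fin m := idx k₀ with hjdx_def
            have hjne : jdx ≠ i := by
              intro heq
              exact hdup ⟨k₀, by rw [← hidx1 k₀, ← hjdx_def, heq],
                by rw [← hidx2 k₀, ← hjdx_def, heq]⟩
            have htight_j : ∀ y ∈ F, ipair (D.A jdx) y = (D.b jdx : ℝ) :=
              fun y hy => hkey y hy k₀ hk₀
            have htight_i : ∀ y ∈ F, ipair (D.A i) y = (D.b i : ℝ) := fun y hy => hy.2
            obtain ⟨q, hq0, hq⟩ := exists_ratio (F := F) (a := D.A jdx) (a' := D.A i)
              hFdim (D.prim jdx).1 (D.prim i).1 htight_j htight_i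
            obtain ⟨p, hpP, hpne⟩ : ∃ p, (∀ j, (D.b j : ℝ) ≤ ipair (D.A j) p) ∧
                ipair (D.A i) p ≠ (D.b i : ℝ) := by
              by_contra hno
              push_neg at hno
              have hle := vectorSpan_le_ker
                (S := {x : Fin n → ℝ | ∀ j, (D.b j : ℝ) ≤ ipair (D.A j) x})
                (a := D.A i) (β := (D.b i : ℝ)) (fun x hx2 => hno x hx2)
              have h1 := finrank_ker_lf (ipairL_ne_zero (D.prim i).1)
              have h2 := Submodule.finrank_mono hle
              have h3 := D.fulldim
              have h4 : setDim {x : Fin n → ℝ | ∀ j, (D.b j : ℝ) ≤ ipair (D.A j) x}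
                  = Module.finrank ℝ
                    (vectorSpan ℝ {x : Fin n → ℝ | ∀ j, (D.b j : ℝ) ≤ ipair (D.A j) x}) := rfl
              rw [h4] at h3
              omega
            obtain ⟨w, hwF⟩ := hFne
            have hbq : (D.b jdx : ℝ) = q * (D.b i : ℝ) := by
              rw [← htight_j w hwF, hq w, htight_i w hwF]
            have hppos : (D.b i : ℝ) < ipair (D.A i) p := lt_of_le_of_ne (hpP i) (Ne.symm hpne)
            have hqpos : 0 < q := by
              rcases lt_or_gt_of_ne hq0 with hneg | hpos
              · exfalso
                have e1 : ipair (D.A jdx) p - (D.b jdx : ℝ)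
                    = q * (ipair (D.A i) p - (D.b i : ℝ)) := by
                  rw [hq p, hbq]; ring
                have e2 := hpP jdx
                nlinarith
              · exact hpos
            have hAeq : D.A jdx = D.A i := by
              apply (D.prim jdx).eq_of_smul (D.prim i) hqpos
              intro j
              have h12 := hq (Pi.single j 1)
              rwa [ipair_single, ipair_single] at h12
            have hbeq : D.b jdx = D.b i := by
              have h13 : ((D.b jdx : ℝ)) = ((D.b i : ℝ)) := by
                rw [← htight_j w hwF, hAeq, htight_i w hwF]
              exact_mod_cast h13
            exact hjne (D.irredundant (show (D.A jdx, D.b jdx) = (D.A i, D.b i) by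
              rw [hAeq, hbeq]))
      · -- x ∈ D.adj (s+r) → x ∈ D'.adj r
        intro hx k
        obtain ⟨i, hiA, hib⟩ := hL1 k
        rw [← hiA, ← hib]
        have h1 := hx i
        linarith
  · -- Part (ii)
    intro r hrpos
    ext x
    rw [Set.mem_smul_set_iff_inv_smul_mem₀ hrpos.ne' (D.adj s) x, D.mem_adj_iff]
    simp only [Set.mem_setOf_eq]
    constructor
    · intro h i
      have h1 := h i
      rw [ipair_smul] at h1
      have h2 := mul_le_mul_of_nonneg_left h1 hrpos.le
      rw [← mul_assoc, mul_inv_cancel₀ hrpos.ne', one_mul, mul_add] at h2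
      exact h2
    · intro h i
      rw [ipair_smul]
      have h1 := h i
      have h2 : r * ((D.b i : ℝ) + s) ≤ ipair (D.A i) x := by rw [mul_add]; linarith
      have h3 := mul_le_mul_of_nonneg_left h2 (inv_nonneg.mpr hrpos.le)
      rw [← mul_assoc, inv_mul_cancel₀ hrpos.ne', one_mul] at h3
      exact h3


end
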